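/- arXiv:2306.02745 — 3 statements merged into one kernel-verified Lean document; each statement's English description precedes it below -/
import Mathlib

section
/- There exists a Hilbert space H and a sequence of closed subspaces V_n = (C x_n)^⊥ (orthogonal complements of unit vectors x_n) whose strong limit is (C x_0)^⊥ for a unit vector x_0, but the orthogonal projections onto V_n do not converge strongly to the projection onto (C x_0)^⊥. Concretely: if x_n = x_0 for n odd and x_n = y_n for n even, where y_n → 0 weakly with ||y_n|| = 1, then the strong limit of {V_n} is (C x_0)^⊥ while P_n x_0 does not converge. -/
open Filter Topology
open scoped InnerProductSpace

/-- The strong limit of a sequence of subspaces. -/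
def strongLimit {H : Type*} [NormedAddCommGroup H] [InnerProductSpace ℂ H]
    (V : ℕ → Submodule ℂ H) : Set H :=
  {x | ∃ u : ℕ → H, (∀ n, u n ∈ V n) ∧ Tendsto u atTop (𝓝 x)}

/-- `P` is the orthogonal projection onto `V`. -/
def IsOrthProj {H : Type*} [NormedAddCommGroup H] [InnerProductSpace ℂ H]
    (V : Submodule ℂ H) (P : H →L[ℂ] H) : Prop :=
  ∀ x : H, P x ∈ V ∧ x - P x ∈ Vᗮ

/-- Uniqueness of the orthogonal decomposition. -/
lemma orthProj_eq {H : Type*} [NormedAddCommGroup H] [InnerProductSpace ℂ H]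
    (V : Submodule ℂ H) (P : H →L[ℂ] H) (hP : IsOrthProj V P) (x a : H)
    (ha : a ∈ V) (hb : x - a ∈ Vᗮ) : P x = a := by
  have h1 := (hP x).1
  have h2 := (hP x).2
  have hd : P x - a ∈ V := V.sub_mem h1 ha
  have hd' : P x - a ∈ Vᗮ := by
    have : P x - a = (x - a) - (x - P x) := by abel
    rw [this]; exact Vᗮ.sub_mem hb h2
  have h0 : ⟪P x - a, P x - a⟫_ℂ = 0 := hd' _ hd
  have := inner_self_eq_zero.mp h0
  rwa [sub_eq_zero] at this

lemma inner_self_one {H : Type*} [NormedAddCommGroup H] [InnerProductSpace ℂ H]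
    (v : H) (hv : ‖v‖ = 1) : ⟪v, v⟫_ℂ = 1 := by
  rw [inner_self_eq_norm_sq_to_K, hv]; norm_num

lemma perp_mem {H : Type*} [NormedAddCommGroup H] [InnerProductSpace ℂ H]
    (v z : H) (hv : ‖v‖ = 1) : z - ⟪v, z⟫_ℂ • v ∈ (ℂ ∙ v)ᗮ := by
  rw [Submodule.mem_orthogonal_singleton_iff_inner_right]
  rw [inner_sub_right, inner_smul_right, inner_self_one v hv]
  ring

theorem stmt3 {H : Type*} [NormedAddCommGroup H] [InnerProductSpace ℂ H] [CompleteSpace H]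
    (x₀ : H) (hx₀ : ‖x₀‖ = 1) (y : ℕ → H) (hy : ∀ n, ‖y n‖ = 1)
    (hyweak : ∀ z : H, Tendsto (fun n => ⟪z, y n⟫_ℂ) atTop (𝓝 0))
    (x : ℕ → H) (hxodd : ∀ n, Odd n → x n = x₀) (hxeven : ∀ n, Even n → x n = y n)
    (V : ℕ → Submodule ℂ H) (hV : ∀ n, V n = (ℂ ∙ x n)ᗮ)
    (P : ℕ → (H →L[ℂ] H)) (hP : ∀ n, IsOrthProj (V n) (P n)) :
    strongLimit V = (((ℂ ∙ x₀)ᗮ : Submodule ℂ H) : Set H) ∧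
      ¬ ∃ L : H, Tendsto (fun n => P n x₀) atTop (𝓝 L) := by
  have hxn : ∀ n, ‖x n‖ = 1 := by
    intro n
    rcases Nat.even_or_odd n with h | h
    · rw [hxeven n h]; exact hy n
    · rw [hxodd n h]; exact hx₀
  have hodd : Tendsto (fun k => 2 * k + 1) atTop atTop :=
    tendsto_atTop_mono (fun k => by simp only [id_eq]; omega) tendsto_id
  have heven : Tendsto (fun k => 2 * k) atTop atTop :=
    tendsto_atTop_mono (fun k => by simp only [id_eq]; omega) tendsto_id
  -- the explicit formula for the projection
  have hPformula : ∀ n, P n x₀ = x₀ - ⟪x n, x₀⟫_ℂ • x n := by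
    intro n
    apply orthProj_eq (V n) (P n) (hP n)
    · rw [hV n]; exact perp_mem (x n) x₀ (hxn n)
    · rw [hV n]
      have : x₀ - (x₀ - ⟪x n, x₀⟫_ℂ • x n) = ⟪x n, x₀⟫_ℂ • x n := by abel
      rw [this]
      exact Submodule.le_orthogonal_orthogonal _
        (Submodule.smul_mem _ _ (Submodule.mem_span_singleton_self _))
  constructor
  · ext z
    constructor
    · rintro ⟨u, hu, hlim⟩
      rw [SetLike.mem_coe, Submodule.mem_orthogonal_singleton_iff_inner_right]
      have h1 : Tendsto (fun k => ⟪x₀, u (2 * k + 1)⟫_ℂ) atTop (𝓝 ⟪x₀, z⟫_ℂ) :=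
        (Tendsto.inner tendsto_const_nhds (hlim.comp hodd))
      have h2 : (fun k => ⟪x₀, u (2 * k + 1)⟫_ℂ) = fun _ => (0 : ℂ) := by
        funext k
        have hm := hu (2 * k + 1)
        rw [hV, hxodd _ ⟨k, by ring⟩, Submodule.mem_orthogonal_singleton_iff_inner_right] at hm
        exact hm
      rw [h2] at h1
      exact tendsto_nhds_unique h1 tendsto_const_nhds
    · intro hz
      rw [SetLike.mem_coe, Submodule.mem_orthogonal_singleton_iff_inner_right] at hz
      refine ⟨fun n => z - ⟪x n, z⟫_ℂ • x n, fun n => by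
        rw [hV n]; exact perp_mem (x n) z (hxn n), ?_⟩
      rw [tendsto_iff_norm_sub_tendsto_zero]
      have key : ∀ n, ‖(z - ⟪x n, z⟫_ℂ • x n) - z‖ = ‖⟪x n, z⟫_ℂ‖ := by
        intro n
        have : (z - ⟪x n, z⟫_ℂ • x n) - z = -(⟪x n, z⟫_ℂ • x n) := by abel
        rw [this, norm_neg, norm_smul, hxn n, mul_one]
      simp only [key]
      have hub : ∀ n, ‖⟪x n, z⟫_ℂ‖ ≤ ‖⟪z, y n⟫_ℂ‖ := by
        intro n
        rcases Nat.even_or_odd n with h | h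
        · rw [hxeven n h, ← inner_conj_symm z (y n), RCLike.norm_conj]
        · rw [hxodd n h]
          have : ⟪x₀, z⟫_ℂ = 0 := hz
          rw [this]; simp
      exact squeeze_zero (fun n => norm_nonneg _) hub
        (by simpa using ((hyweak z).norm))
  · rintro ⟨L, hL⟩
    -- along odd indices, P n x₀ = 0
    have hoddval : ∀ k, P (2 * k + 1) x₀ = 0 := by
      intro k
      rw [hPformula, hxodd _ ⟨k, by ring⟩, inner_self_one x₀ hx₀, one_smul, sub_self]
    have hL0 : L = 0 := by
      have h1 : Tendsto (fun k => P (2 * k + 1) x₀) atTop (𝓝 L) := hL.comp hodd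
      simp only [hoddval] at h1
      exact (tendsto_nhds_unique h1 tendsto_const_nhds)
    -- along even indices, P n x₀ → x₀
    have hLx : L = x₀ := by
      have h1 : Tendsto (fun k => P (2 * k) x₀) atTop (𝓝 L) := hL.comp heven
      have h2 : Tendsto (fun k => P (2 * k) x₀) atTop (𝓝 x₀) := by
        rw [tendsto_iff_norm_sub_tendsto_zero]
        have key : ∀ k, ‖P (2 * k) x₀ - x₀‖ = ‖⟪x₀, y (2 * k)⟫_ℂ‖ := by
          intro k
          rw [hPformula, hxeven _ ⟨k, by ring⟩]
          have : (x₀ - ⟪y (2 * k), x₀⟫_ℂ • y (2 * k)) - x₀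
              = -(⟪y (2 * k), x₀⟫_ℂ • y (2 * k)) := by abel
          rw [this, norm_neg, norm_smul, hy, mul_one,
            ← inner_conj_symm x₀ (y (2 * k)), RCLike.norm_conj]
        simp only [key]
        simpa [Function.comp_def] using ((hyweak x₀).norm.comp heven)
      exact tendsto_nhds_unique h1 h2
    rw [hL0] at hLx
    have : ‖x₀‖ = 0 := by rw [← hLx]; simp
    rw [hx₀] at this
    norm_num at this
end

section
/- Let U_n, U be partial isometries on a separable Hilbert space H with initial spaces H_+^n, H_+ respectively (i.e. U_n is isometric on H_+^n and zero on its orthogonal complement), where dim H_+^n = dim H_+ = k < ∞. If U_n → U strongly, then for every φ_+ ∈ H_+ there exists a sequence φ_+^n ∈ H_+^n with φ_+^n → φ_+ and U_n φ_+^n → U φ_+. -/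
open Filter Topology

/-- `U` is a partial isometry with initial space `V`: it is isometric on `V`
and vanishes on `Vᗮ`. -/
def IsPartialIsometryWithInitial {H : Type*} [NormedAddCommGroup H] [InnerProductSpace ℂ H]
    (U : H →L[ℂ] H) (V : Submodule ℂ H) : Prop :=
  (∀ x ∈ V, ‖U x‖ = ‖x‖) ∧ ∀ x ∈ Vᗮ, U x = 0

theorem stmt12 {H : Type*} [NormedAddCommGroup H] [InnerProductSpace ℂ H] [CompleteSpace H]
    [TopologicalSpace.SeparableSpace H] (k : ℕ)
    (Un : ℕ → (H →L[ℂ] H)) (Hpn : ℕ → Submodule ℂ H)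
    (hUn : ∀ n, IsPartialIsometryWithInitial (Un n) (Hpn n))
    (hdimn : ∀ n, Module.finrank ℂ (Hpn n) = k) (hfinn : ∀ n, FiniteDimensional ℂ (Hpn n))
    (U : H →L[ℂ] H) (Hp : Submodule ℂ H)
    (hU : IsPartialIsometryWithInitial U Hp)
    (hdim : Module.finrank ℂ Hp = k) (hfin : FiniteDimensional ℂ Hp)
    (hconv : ∀ x : H, Tendsto (fun n => Un n x) atTop (𝓝 (U x))) :
    ∀ φ ∈ Hp, ∃ u : ℕ → H, (∀ n, u n ∈ Hpn n) ∧
      Tendsto u atTop (𝓝 φ) ∧ Tendsto (fun n => Un n (u n)) atTop (𝓝 (U φ)) := by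
  intro φ hφ
  haveI := hfinn
  set u : ℕ → H := fun n => (Submodule.orthogonalProjection (Hpn n) φ : H) with hu
  have humem : ∀ n, u n ∈ Hpn n := fun n => (Submodule.orthogonalProjection (Hpn n) φ).2
  have hperp : ∀ n, φ - u n ∈ (Hpn n)ᗮ := fun n =>
    Submodule.sub_starProjection_mem_orthogonal (K := Hpn n) φ
  -- Un n (u n) = Un n φ
  have hkey : ∀ n, Un n (u n) = Un n φ := by
    intro n
    have : Un n φ = Un n (u n) + Un n (φ - u n) := by
      rw [← map_add]; congr 1; abel
    rw [(hUn n).2 _ (hperp n), add_zero] at this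
    exact this.symm
  -- ‖u n‖ = ‖Un n φ‖
  have hnorm : ∀ n, ‖u n‖ = ‖Un n φ‖ := fun n => by
    rw [← hkey n, (hUn n).1 _ (humem n)]
  -- ‖u n‖ → ‖φ‖
  have hnconv : Tendsto (fun n => ‖u n‖) atTop (𝓝 ‖φ‖) := by
    have := (hconv φ).norm
    rw [hU.1 φ hφ] at this
    simpa [hnorm] using this
  -- Pythagoras : ‖φ - u n‖ ^ 2 = ‖φ‖ ^ 2 - ‖u n‖ ^ 2
  have hpyth : ∀ n, ‖φ - u n‖ ^ 2 = ‖φ‖ ^ 2 - ‖u n‖ ^ 2 := by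
    intro n
    have hinner : (inner ℂ (u n) (φ - u n) : ℂ) = 0 :=
      Submodule.inner_right_of_mem_orthogonal (humem n) (hperp n)
    have : ‖u n + (φ - u n)‖ ^ 2 = ‖u n‖ ^ 2 + ‖φ - u n‖ ^ 2 := by
      rw [norm_add_sq (𝕜 := ℂ), hinner]; simp
    have h2 : u n + (φ - u n) = φ := by abel
    rw [h2] at this
    linarith
  have hsub : Tendsto (fun n => ‖φ - u n‖) atTop (𝓝 0) := by
    have hsq : Tendsto (fun n => ‖φ - u n‖ ^ 2) atTop (𝓝 0) := by
      have : Tendsto (fun n => ‖φ‖ ^ 2 - ‖u n‖ ^ 2) atTop (𝓝 (‖φ‖ ^ 2 - ‖φ‖ ^ 2)) :=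
        (tendsto_const_nhds).sub (hnconv.pow 2)
      simpa [hpyth] using this
    have h := (Real.continuous_sqrt.tendsto 0).comp hsq
    have heq : (fun n => ‖φ - u n‖) = (fun x => Real.sqrt x) ∘ fun n => ‖φ - u n‖ ^ 2 := by
      funext n; simp [Real.sqrt_sq (norm_nonneg _)]
    rw [heq]; simpa using h
  have htend : Tendsto u atTop (𝓝 φ) := by
    rw [tendsto_iff_norm_sub_tendsto_zero]
    simpa [norm_sub_rev] using hsub
  refine ⟨u, humem, htend, ?_⟩
  simpa [hkey] using hconv φ
end

section
/- Let U_n, U be partial isometries on a separable Hilbert space H with k-dimensional initial spaces H_+^n, H_+ (k finite and fixed). Suppose for every φ_+ ∈ H_+ there exists a sequence φ_+^n ∈ H_+^n with φ_+^n → φ_+ and U_n φ_+^n → U φ_+. Then U_n → U strongly on all of H. -/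
open Filter Topology

theorem stmt13 {H : Type*} [NormedAddCommGroup H] [InnerProductSpace ℂ H] [CompleteSpace H]
    [TopologicalSpace.SeparableSpace H] (k : ℕ)
    (Un : ℕ → (H →L[ℂ] H)) (Hpn : ℕ → Submodule ℂ H)
    (hUn : ∀ n, IsPartialIsometryWithInitial (Un n) (Hpn n))
    (hdimn : ∀ n, Module.finrank ℂ (Hpn n) = k) (hfinn : ∀ n, FiniteDimensional ℂ (Hpn n))
    (U : H →L[ℂ] H) (Hp : Submodule ℂ H)
    (hU : IsPartialIsometryWithInitial U Hp)
    (hdim : Module.finrank ℂ Hp = k) (hfin : FiniteDimensional ℂ Hp)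
    (happrox : ∀ φ ∈ Hp, ∃ u : ℕ → H, (∀ n, u n ∈ Hpn n) ∧
      Tendsto u atTop (𝓝 φ) ∧ Tendsto (fun n => Un n (u n)) atTop (𝓝 (U φ))) :
    ∀ x : H, Tendsto (fun n => Un n x) atTop (𝓝 (U x)) := by
  classical
  -- projections onto the `Hpn n`
  have hOP : ∀ n, Submodule.HasOrthogonalProjection (Hpn n) := fun n => by
    haveI := hfinn n; infer_instance
  let P : ℕ → H → H := fun n y =>
    ((@Submodule.orthogonalProjection ℂ H _ _ _ (Hpn n) (hOP n)) y : H)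
  have hP_mem : ∀ n y, P n y ∈ Hpn n := fun n y => SetLike.coe_mem _
  have hP_orth : ∀ n y, y - P n y ∈ (Hpn n)ᗮ := fun n y => by
    haveI := hOP n
    exact Submodule.sub_starProjection_mem_orthogonal y
  have hP_norm : ∀ n y, ‖P n y‖ ≤ ‖y‖ := by
    intro n y
    haveI := hOP n
    calc ‖P n y‖ = ‖Submodule.orthogonalProjection (Hpn n) y‖ := rfl
      _ ≤ ‖Submodule.orthogonalProjection (Hpn n)‖ * ‖y‖ :=
          (Submodule.orthogonalProjection (Hpn n)).le_opNorm y
      _ ≤ 1 * ‖y‖ :=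
          mul_le_mul_of_nonneg_right (Submodule.orthogonalProjectionOnto_norm_le _) (norm_nonneg y)
      _ = ‖y‖ := one_mul _
  -- the partial isometries are contractions
  have hcontr : ∀ n (y : H), ‖Un n y‖ ≤ ‖y‖ := by
    intro n y
    have h0 : Un n (y - P n y) = 0 := (hUn n).2 _ (hP_orth n y)
    rw [map_sub, sub_eq_zero] at h0
    rw [h0, (hUn n).1 _ (hP_mem n y)]
    exact hP_norm n y
  -- orthonormal basis of `Hp`, viewed in `H`
  haveI := hfin
  let b : OrthonormalBasis (Fin k) ℂ Hp := (stdOrthonormalBasis ℂ Hp).reindex (finCongr hdim)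
  let e : Fin k → H := fun i => (b i : H)
  have he_mem : ∀ i, e i ∈ Hp := fun i => SetLike.coe_mem _
  have he_on : Orthonormal ℂ e := by
    have hb := b.orthonormal
    rw [orthonormal_iff_ite] at hb ⊢
    intro i j
    have h := hb i j
    rwa [Submodule.coe_inner] at h
  -- choose approximating sequences for each basis vector
  choose v hv_mem hv_tend hv_Utend using fun i => happrox (e i) (he_mem i)
  set ε : ℝ := (2 * ((k : ℝ) + 1))⁻¹ with hε_def
  have hε_pos : 0 < ε := by rw [hε_def]; positivity
  have hεk : (k : ℝ) * ε ≤ 1 / 2 := by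
    rw [hε_def, mul_inv]
    have h2 : (0 : ℝ) < (k : ℝ) + 1 := by positivity
    have h3 : (k : ℝ) * (((k : ℝ) + 1)⁻¹) ≤ 1 := by
      rw [mul_inv_le_iff₀ h2, one_mul]; linarith
    calc (k : ℝ) * ((2 : ℝ)⁻¹ * ((k : ℝ) + 1)⁻¹)
        = ((k : ℝ) * ((k : ℝ) + 1)⁻¹) * (2 : ℝ)⁻¹ := by ring
      _ ≤ 1 * (2 : ℝ)⁻¹ := by
          apply mul_le_mul_of_nonneg_right h3 (by norm_num)
      _ = 1 / 2 := by norm_num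
  have hev : ∀ᶠ n in atTop, ∀ i, ‖v i n - e i‖ ≤ ε := by
    rw [eventually_all]
    intro i
    have h : Tendsto (fun n => ‖v i n - e i‖) atTop (𝓝 0) := by
      have h' := ((hv_tend i).sub (tendsto_const_nhds (x := e i))).norm
      rwa [sub_self, norm_zero] at h'
    exact h.eventually_le_const hε_pos
  -- coefficient bound when the `v`'s are ε-close to the `e`'s
  have hcoef : ∀ n, (∀ i, ‖v i n - e i‖ ≤ ε) →
      ∀ c : Fin k → ℂ, ∀ i, ‖c i‖ ≤ 2 * ‖∑ j, c j • v j n‖ := by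
    intro n hn c i
    set m : ℝ := ‖∑ j, c j • e j‖ with hm_def
    have hm_nn : 0 ≤ m := by rw [hm_def]; exact norm_nonneg _
    have hm2 : m ^ 2 = ∑ j, ‖c j‖ ^ 2 := by
      have hinner := he_on.inner_sum c c Finset.univ
      rw [inner_self_eq_norm_sq_to_K] at hinner
      rw [Finset.sum_congr rfl (fun j _ => RCLike.conj_mul (c j))] at hinner
      rw [hm_def]
      exact_mod_cast hinner
    have hci : ∀ j, ‖c j‖ ≤ m := by
      intro j
      have h1 : ‖c j‖ ^ 2 ≤ m ^ 2 := by
        rw [hm2]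
        exact Finset.single_le_sum (f := fun j => ‖c j‖ ^ 2)
          (fun j _ => by positivity) (Finset.mem_univ j)
      nlinarith [norm_nonneg (c j)]
    have hdiff : ‖(∑ j, c j • e j) - ∑ j, c j • v j n‖ ≤ m / 2 := by
      rw [← Finset.sum_sub_distrib]
      calc ‖∑ j, (c j • e j - c j • v j n)‖
          ≤ ∑ j, ‖c j • e j - c j • v j n‖ := norm_sum_le _ _
        _ = ∑ j, ‖c j‖ * ‖e j - v j n‖ := by
            refine Finset.sum_congr rfl fun j _ => ?_
            rw [← smul_sub, norm_smul]
        _ ≤ ∑ _j : Fin k, m * ε := by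
            refine Finset.sum_le_sum fun j _ => ?_
            have h1 : ‖e j - v j n‖ ≤ ε := by rw [norm_sub_rev]; exact hn j
            exact mul_le_mul (hci j) h1 (norm_nonneg _) hm_nn
        _ = (k : ℝ) * m * ε := by
            rw [Finset.sum_const, Finset.card_univ, Fintype.card_fin, nsmul_eq_mul]; ring
        _ ≤ m / 2 := by
            calc (k : ℝ) * m * ε = m * ((k : ℝ) * ε) := by ring
              _ ≤ m * (1 / 2) := mul_le_mul_of_nonneg_left hεk hm_nn
              _ = m / 2 := by ring
    have hm_le : m ≤ 2 * ‖∑ j, c j • v j n‖ := by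
      have h1 : m ≤ ‖∑ j, c j • v j n‖ + m / 2 := by
        calc m = ‖(∑ j, c j • v j n) + ((∑ j, c j • e j) - ∑ j, c j • v j n)‖ := by
              rw [hm_def]; congr 1; abel
          _ ≤ ‖∑ j, c j • v j n‖ + ‖(∑ j, c j • e j) - ∑ j, c j • v j n‖ :=
              norm_add_le _ _
          _ ≤ ‖∑ j, c j • v j n‖ + m / 2 := by linarith
      linarith
    exact le_trans (hci i) hm_le
  -- key: projections of vectors orthogonal to `Hp` tend to zero
  have hkey : ∀ ψ : H, ψ ∈ Hpᗮ → Tendsto (fun n => ‖P n ψ‖) atTop (𝓝 0) := by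
    intro ψ hψ
    have hS : Tendsto (fun n => 2 * ∑ i, ‖(inner ℂ (v i n) ψ : ℂ)‖) atTop (𝓝 0) := by
      have h0 : ∀ i : Fin k, Tendsto (fun n => ‖(inner ℂ (v i n) ψ : ℂ)‖) atTop (𝓝 0) := by
        intro i
        have h1 : Tendsto (fun n => (inner ℂ (v i n) ψ : ℂ)) atTop (𝓝 (inner ℂ (e i) ψ : ℂ)) :=
          (hv_tend i).inner tendsto_const_nhds
        have h2 : (inner ℂ (e i) ψ : ℂ) = 0 := hψ _ (he_mem i)
        rw [h2] at h1
        simpa using h1.norm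
      have h3 := tendsto_finset_sum Finset.univ (fun i (_ : i ∈ Finset.univ) => h0 i)
      have h4 := h3.const_mul (2 : ℝ)
      simpa using h4
    apply squeeze_zero' (Eventually.of_forall fun n => norm_nonneg _) ?_ hS
    filter_upwards [hev] with n hn
    haveI := hfinn n
    -- the `v i n` span `Hpn n`
    have hsub : Submodule.span ℂ (Set.range fun i => v i n) ≤ Hpn n := by
      rw [Submodule.span_le]; rintro _ ⟨i, rfl⟩; exact hv_mem i n
    have hli : LinearIndependent ℂ (fun i => v i n) := by
      rw [Fintype.linearIndependent_iff]
      intro c hc i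
      have h5 := hcoef n hn c i
      rw [hc, norm_zero, mul_zero] at h5
      exact norm_eq_zero.mp (le_antisymm h5 (norm_nonneg _))
    have hspan : Submodule.span ℂ (Set.range fun i => v i n) = Hpn n := by
      apply Submodule.eq_of_le_of_finrank_le hsub
      rw [hdimn n, finrank_span_eq_card hli, Fintype.card_fin]
    set w : H := P n ψ with hw_def
    have hw_nn : 0 ≤ ‖w‖ := norm_nonneg _
    have hwmem : w ∈ Submodule.span ℂ (Set.range fun i => v i n) := by
      rw [hspan]; exact hP_mem n ψ
    obtain ⟨c, hc⟩ := (Submodule.mem_span_range_iff_exists_fun ℂ).mp hwmem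
    have hiw : (inner ℂ w ψ : ℂ) = (‖w‖ : ℂ) ^ 2 := by
      have h1 : (inner ℂ w (ψ - w) : ℂ) = 0 :=
        Submodule.inner_right_of_mem_orthogonal (hP_mem n ψ) (hP_orth n ψ)
      have h3 : w + (ψ - w) = ψ := by abel
      have h2 : (inner ℂ w ψ : ℂ) = inner ℂ w w + inner ℂ w (ψ - w) := by
        rw [← inner_add_right, h3]
      rw [h2, h1, add_zero, inner_self_eq_norm_sq_to_K]
      norm_cast
    have hsum : (inner ℂ w ψ : ℂ) = ∑ i, (starRingEnd ℂ) (c i) * (inner ℂ (v i n) ψ : ℂ) := by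
      rw [← hc, sum_inner]
      exact Finset.sum_congr rfl fun i _ => inner_smul_left _ _ _
    have hb : ‖w‖ ^ 2 ≤ 2 * ‖w‖ * ∑ i, ‖(inner ℂ (v i n) ψ : ℂ)‖ := by
      have h4 : ‖w‖ ^ 2 = ‖(inner ℂ w ψ : ℂ)‖ := by
        rw [hiw]
        rw [norm_pow, Complex.norm_real, Real.norm_eq_abs, abs_of_nonneg hw_nn]
      calc ‖w‖ ^ 2 = ‖(inner ℂ w ψ : ℂ)‖ := h4
        _ = ‖∑ i, (starRingEnd ℂ) (c i) * (inner ℂ (v i n) ψ : ℂ)‖ := by rw [hsum]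
        _ ≤ ∑ i, ‖(starRingEnd ℂ) (c i) * (inner ℂ (v i n) ψ : ℂ)‖ := norm_sum_le _ _
        _ = ∑ i, ‖c i‖ * ‖(inner ℂ (v i n) ψ : ℂ)‖ := by
            refine Finset.sum_congr rfl fun i _ => ?_
            rw [norm_mul, RCLike.norm_conj]
        _ ≤ ∑ i, (2 * ‖w‖) * ‖(inner ℂ (v i n) ψ : ℂ)‖ := by
            refine Finset.sum_le_sum fun i _ => ?_
            apply mul_le_mul_of_nonneg_right _ (norm_nonneg _)
            have h5 := hcoef n hn c i
            rwa [hc] at h5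
        _ = 2 * ‖w‖ * ∑ i, ‖(inner ℂ (v i n) ψ : ℂ)‖ := by rw [Finset.mul_sum]
    have hsum_nn : 0 ≤ ∑ i, ‖(inner ℂ (v i n) ψ : ℂ)‖ :=
      Finset.sum_nonneg fun i _ => norm_nonneg _
    show ‖w‖ ≤ 2 * ∑ i, ‖(inner ℂ (v i n) ψ : ℂ)‖
    nlinarith
  -- main argument
  intro x
  set φ : H := ((Submodule.orthogonalProjection Hp) x : H) with hφ_def
  have hφ_mem : φ ∈ Hp := SetLike.coe_mem _
  have hψ_mem : x - φ ∈ Hpᗮ := Submodule.sub_starProjection_mem_orthogonal x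
  have hUx : U x = U φ := by
    have h0 : U (x - φ) = 0 := hU.2 _ hψ_mem
    rw [map_sub, sub_eq_zero] at h0
    exact h0
  obtain ⟨u, humem, hut, huUt⟩ := happrox φ hφ_mem
  have h1 : Tendsto (fun n => Un n φ) atTop (𝓝 (U φ)) := by
    have hdiff : Tendsto (fun n => Un n (φ - u n)) atTop (𝓝 0) := by
      apply squeeze_zero_norm (fun n => hcontr n (φ - u n))
      have h' := ((tendsto_const_nhds (x := φ)).sub hut).norm
      rwa [sub_self, norm_zero] at h'
    have heq : (fun n => Un n φ) = fun n => Un n (u n) + Un n (φ - u n) := by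
      funext n
      rw [map_sub]
      abel
    rw [heq]
    simpa using huUt.add hdiff
  have h2 : Tendsto (fun n => Un n (x - φ)) atTop (𝓝 0) := by
    apply squeeze_zero_norm (a := fun n => ‖P n (x - φ)‖) _ (hkey _ hψ_mem)
    intro n
    have h0 : Un n ((x - φ) - P n (x - φ)) = 0 := (hUn n).2 _ (hP_orth n (x - φ))
    rw [map_sub, sub_eq_zero] at h0
    rw [h0, (hUn n).1 _ (hP_mem n (x - φ))]
  have heq : (fun n => Un n x) = fun n => Un n φ + Un n (x - φ) := by
    funext n
    rw [map_sub]
    abel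
  rw [heq, hUx]
  simpa using h1.add h2
end
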